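/- Let S ∈ RatFunc ℂ and let n ≥ 1. Then 𝔉^{(n)}(S) = 0 and 𝔉^{(n−1)}(S) ≠ 0 if and only if a_k(S) = 0 for every integer k ≡ 2^n − 1 (mod 2^n) and there exists an integer k ≡ 2^{n−1} − 1 (mod 2^n) with a_k(S) ≠ 0. In particular, for every n ≥ 1 there exists a rational function that vanishes after exactly n applications of 𝔉. -/

import Mathlib

/-- The `n`-th coefficient of the Laurent expansion at `0` of a rational function. -/
noncomputable def coeffL (R : RatFunc ℂ) (n : ℤ) : ℂ :=
  ((R : LaurentSeries ℂ)).coeff n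

lemma coeffL_iterate (F : RatFunc ℂ → RatFunc ℂ)
    (hF : ∀ R : RatFunc ℂ, ∀ k : ℤ, coeffL (F R) k = coeffL R (2 * k + 1))
    (m : ℕ) (S : RatFunc ℂ) (k : ℤ) :
    coeffL (F^[m] S) k = coeffL S (2 ^ m * k + (2 ^ m - 1)) := by
  induction m generalizing k with
  | zero => simp
  | succ m ih =>
    rw [Function.iterate_succ_apply', hF, ih]
    ring_nf

lemma eq_zero_iff_coeffL (R : RatFunc ℂ) : R = 0 ↔ ∀ k, coeffL R k = 0 := by
  constructor
  · rintro rfl k; simp [coeffL]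
  · intro h
    have h' : (R : LaurentSeries ℂ) = 0 := by
      ext k
      simpa [coeffL] using h k
    exact (map_eq_zero_iff _ (RingHom.injective _)).mp h'

lemma coeffL_X_pow (m : ℕ) (k : ℤ) :
    coeffL (RatFunc.X ^ m) k = if k = (m : ℤ) then 1 else 0 := by
  rw [coeffL, map_pow, RatFunc.coe_X, HahnSeries.single_pow]
  simp [HahnSeries.coeff_single]

lemma modEq_char (N r k : ℤ) : k ≡ r [ZMOD N] ↔ ∃ j : ℤ, k = N * j + r := by
  rw [Int.modEq_iff_dvd]
  constructor
  · rintro ⟨j, hj⟩; exact ⟨-j, by linarith⟩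
  · rintro ⟨j, rfl⟩; exact ⟨-j, by ring⟩

/-- Characterization of the rational functions that vanish after exactly `n` applications
of the map `𝔉` (here an arbitrary map `F` satisfying the defining coefficient identity
`a_k(F R) = a_{2k+1}(R)`), together with the fact that such functions exist for every
`n ≥ 1`. -/
theorem stmt_2 (F : RatFunc ℂ → RatFunc ℂ)
    (hF : ∀ R : RatFunc ℂ, ∀ k : ℤ, coeffL (F R) k = coeffL R (2 * k + 1))
    (n : ℕ) (hn : 1 ≤ n) :
    (∀ S : RatFunc ℂ,
      (F^[n] S = 0 ∧ F^[n - 1] S ≠ 0) ↔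
        ((∀ k : ℤ, k ≡ 2 ^ n - 1 [ZMOD (2 ^ n : ℤ)] → coeffL S k = 0) ∧
          ∃ k : ℤ, k ≡ 2 ^ (n - 1) - 1 [ZMOD (2 ^ n : ℤ)] ∧ coeffL S k ≠ 0)) ∧
    ∃ S : RatFunc ℂ, F^[n] S = 0 ∧ F^[n - 1] S ≠ 0 := by
  obtain ⟨m, rfl⟩ : ∃ m, n = m + 1 := ⟨n - 1, (Nat.succ_pred_eq_of_pos hn).symm⟩
  simp only [Nat.add_sub_cancel]
  have hz : ∀ (p : ℕ) (S : RatFunc ℂ),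
      F^[p] S = 0 ↔ ∀ j : ℤ, coeffL S (2 ^ p * j + (2 ^ p - 1)) = 0 := by
    intro p S
    rw [eq_zero_iff_coeffL]
    exact forall_congr' fun j => by rw [coeffL_iterate F hF]
  have key : ∀ S : RatFunc ℂ,
      (F^[m+1] S = 0 ∧ F^[m] S ≠ 0) ↔
        ((∀ k : ℤ, k ≡ 2 ^ (m+1) - 1 [ZMOD (2 ^ (m+1) : ℤ)] → coeffL S k = 0) ∧
          ∃ k : ℤ, k ≡ 2 ^ m - 1 [ZMOD (2 ^ (m+1) : ℤ)] ∧ coeffL S k ≠ 0) := by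
    intro S
    have hnz : F^[m] S ≠ 0 ↔ ∃ j : ℤ, coeffL S (2 ^ m * j + (2 ^ m - 1)) ≠ 0 := by
      rw [Ne, hz m S, not_forall]
    constructor
    · rintro ⟨h0, h1⟩
      rw [hz] at h0
      refine ⟨?_, ?_⟩
      · intro k hk
        obtain ⟨j, rfl⟩ := (modEq_char _ _ _).mp hk
        exact h0 j
      · obtain ⟨j, hj⟩ := hnz.mp h1
        rcases Int.even_or_odd j with ⟨t, rfl⟩ | ⟨t, rfl⟩
        · refine ⟨2 ^ m * (t + t) + (2 ^ m - 1), (modEq_char _ _ _).mpr ⟨t, by ring⟩, hj⟩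
        · exfalso
          apply hj
          have e : (2:ℤ) ^ m * (2 * t + 1) + (2 ^ m - 1)
              = 2 ^ (m+1) * t + (2 ^ (m+1) - 1) := by ring
          rw [e]
          exact h0 t
    · rintro ⟨h0, k, hk, hknz⟩
      have h0' : F^[m+1] S = 0 :=
        (hz _ _).mpr fun j => h0 _ ((modEq_char _ _ _).mpr ⟨j, rfl⟩)
      refine ⟨h0', hnz.mpr ?_⟩
      obtain ⟨t, rfl⟩ := (modEq_char _ _ _).mp hk
      refine ⟨2 * t, ?_⟩
      have e : (2:ℤ) ^ m * (2 * t) + (2 ^ m - 1) = 2 ^ (m+1) * t + (2 ^ m - 1) := by ring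
      rw [e]
      exact hknz
  refine ⟨key, ?_⟩
  have hcast : ((2 ^ m - 1 : ℕ) : ℤ) = 2 ^ m - 1 := by
    push_cast [Nat.one_le_two_pow]
    ring
  refine ⟨RatFunc.X ^ (2 ^ m - 1), (key _).mpr ⟨?_, ?_⟩⟩
  · intro k hk
    rw [coeffL_X_pow]
    rw [if_neg]
    intro h
    obtain ⟨j, rfl⟩ := (modEq_char _ _ _).mp hk
    rw [hcast] at h
    have hP : (0:ℤ) < 2 ^ m := by positivity
    have : (1:ℤ) = 2 * (j + 1) := by
      have h2 : (2:ℤ) ^ (m+1) = 2 ^ m * 2 := by ring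
      nlinarith [h, h2]
    omega
  · refine ⟨2 ^ m - 1, Int.ModEq.refl _, ?_⟩
    rw [coeffL_X_pow, hcast, if_pos rfl]
    exact one_ne_zero
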